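/- The Pfaff–Saalschütz identity: for a nonnegative integer n and parameters a, b, d, e (avoiding poles) with d + e = a + b - n + 1, one has ∑_{k=0}^{n} (a)_k (b)_k (-n)_k / ((d)_k (e)_k k!) = (d-a)_n (d-b)_n / ((d)_n (d-a-b)_n). -/

import Mathlib

set_option maxHeartbeats 1000000
set_option linter.unusedVariables false


/-- Rising factorial (Pochhammer symbol) `(x)_k = x(x+1)⋯(x+k-1)`. -/
def rise (x : ℚ) (k : ℕ) : ℚ := ∏ i ∈ Finset.range k, (x + i)

lemma rise_succ (x : ℚ) (k : ℕ) : rise x (k + 1) = rise x k * (x + k) := by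
  simp [rise, Finset.prod_range_succ]

lemma rise_shift (x : ℚ) (k : ℕ) : x * rise (x + 1) k = rise x k * (x + k) := by
  induction k with
  | zero => simp [rise]
  | succ k ih =>
      rw [rise_succ, rise_succ]
      push_cast
      linear_combination (x + 1 + (k:ℚ)) * ih

lemma rise_factor {x : ℚ} {m : ℕ} (h : rise x m ≠ 0) {i : ℕ} (hi : i < m) :
    x + i ≠ 0 := by
  intro h0
  exact h (Finset.prod_eq_zero (Finset.mem_range.2 hi) h0)

lemma rise_ne_zero_of_le {x : ℚ} {m k : ℕ} (h : rise x m ≠ 0) (hk : k ≤ m) :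
    rise x k ≠ 0 := by
  rw [rise, Finset.prod_ne_zero_iff]
  intro i hi
  exact rise_factor h (lt_of_lt_of_le (Finset.mem_range.1 hi) hk)

/-- WZ certificate function. -/
def WZ (n : ℕ) (a b d e : ℚ) (k : ℕ) : ℚ :=
  (k : ℚ) * ((d-1)*(d+(n:ℚ)-a-b) + ((n:ℚ)+1-a-b)*(k:ℚ) - (k:ℚ)^2)
    * rise a k * rise b k * rise (-((n:ℚ)+1)) k
    / ((d+(n:ℚ)) * ((n:ℚ)+1) * rise d k * rise e k * (e+(k:ℚ)) * (Nat.factorial k))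

/-- Atom-level telescoping identity (generic `k < n` case). -/
lemma keyA_atom (a b d e p q A B M D E F : ℚ)
    (hee : e = a + b - p - d)
    (he0 : e ≠ 0) (heq : e + q ≠ 0) (heq1 : e + q + 1 ≠ 0)
    (hdq : d + q ≠ 0) (hdp : d + p ≠ 0) (hab : d - a - b + p ≠ 0)
    (hp1 : p + 1 ≠ 0) (hq1 : q + 1 ≠ 0)
    (hD : D ≠ 0) (hE : E ≠ 0) (hF : F ≠ 0) :
    A*B*M/(D*E*F)
      - (d-a+p)*(d-b+p)/((d+p)*(d-a-b+p))*(A*B*(M*(p+1-q)/(p+1))/(D*(E*(e+q)/e)*F))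
    = (q+1)*((d-1)*(d+p-a-b)+(p+1-a-b)*(q+1)-(q+1)^2)*(A*(a+q))*(B*(b+q))*(M*(-(p+1)+q))
        /((d+p)*(p+1)*(D*(d+q))*(E*(e+q))*(e+(q+1))*((q+1)*F))
      - q*((d-1)*(d+p-a-b)+(p+1-a-b)*q-q^2)*A*B*M/((d+p)*(p+1)*D*E*(e+q)*F) := by
  have hDEF : D*E*F ≠ 0 := mul_ne_zero (mul_ne_zero hD hE) hF
  have heq1' : e + (q+1) ≠ 0 := by intro hz; apply heq1; linarith
  have hQc : (d+p)*(d-a-b+p)*(p+1)*(d+q)*(e+q)*(e+q+1)*(q+1)*(D*E*F) ≠ 0 :=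
    mul_ne_zero (mul_ne_zero (mul_ne_zero (mul_ne_zero (mul_ne_zero (mul_ne_zero
      (mul_ne_zero hdp hab) hp1) hdq) heq) heq1) hq1) hDEF
  have c1 : A*B*M/(D*E*F)
      = A*B*M*((d+p)*(d-a-b+p)*(p+1)*(d+q)*(e+q)*(e+q+1)*(q+1))
        /((d+p)*(d-a-b+p)*(p+1)*(d+q)*(e+q)*(e+q+1)*(q+1)*(D*E*F)) := by
    rw [div_eq_div_iff hDEF hQc]
    ring
  have c2 : (d-a+p)*(d-b+p)/((d+p)*(d-a-b+p))*(A*B*(M*(p+1-q)/(p+1))/(D*(E*(e+q)/e)*F))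
      = (d-a+p)*(d-b+p)*(A*B*M)*(p+1-q)*e*((d+q)*(e+q+1)*(q+1))
        /((d+p)*(d-a-b+p)*(p+1)*(d+q)*(e+q)*(e+q+1)*(q+1)*(D*E*F)) := by
    field_simp
  have c3 : (q+1)*((d-1)*(d+p-a-b)+(p+1-a-b)*(q+1)-(q+1)^2)*(A*(a+q))*(B*(b+q))*(M*(-(p+1)+q))
        /((d+p)*(p+1)*(D*(d+q))*(E*(e+q))*(e+(q+1))*((q+1)*F))
      = (q+1)*((d-1)*(d+p-a-b)+(p+1-a-b)*(q+1)-(q+1)^2)*(A*(a+q))*(B*(b+q))*(M*(q-p-1))*(d-a-b+p)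
        /((d+p)*(d-a-b+p)*(p+1)*(d+q)*(e+q)*(e+q+1)*(q+1)*(D*E*F)) := by
    rw [div_eq_div_iff (mul_ne_zero (mul_ne_zero (mul_ne_zero (mul_ne_zero
      (mul_ne_zero hdp hp1) (mul_ne_zero hD hdq)) (mul_ne_zero hE heq)) heq1') (mul_ne_zero hq1 hF)) hQc]
    generalize (d-1)*(d+p-a-b)+(p+1-a-b)*(q+1)-(q+1)^2 = r1
    ring
  have c4 : q*((d-1)*(d+p-a-b)+(p+1-a-b)*q-q^2)*A*B*M/((d+p)*(p+1)*D*E*(e+q)*F)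
      = q*((d-1)*(d+p-a-b)+(p+1-a-b)*q-q^2)*(A*B*M)*((d-a-b+p)*(d+q)*(e+q+1)*(q+1))
        /((d+p)*(d-a-b+p)*(p+1)*(d+q)*(e+q)*(e+q+1)*(q+1)*(D*E*F)) := by
    rw [div_eq_div_iff (mul_ne_zero (mul_ne_zero (mul_ne_zero (mul_ne_zero (mul_ne_zero
      hdp hp1) hD) hE) heq) hF) hQc]
    generalize (d-1)*(d+p-a-b)+(p+1-a-b)*q-q^2 = r2
    ring
  rw [c1, c2, c3, c4, div_sub_div_same, div_sub_div_same]
  congr 1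
  linear_combination (A*B*M*(p*q^3 + (-1:ℚ)*p*q^5 + p^2*q^2 + (3:ℚ)*p^2*q^3 + (2:ℚ)*p^2*q^4 + e*p^2*q^2 + e*p^2*q^3 + d*q^3 + (-1:ℚ)*d*q^5 + (3:ℚ)*d*p*q^2 + (5:ℚ)*d*p*q^3 + (2:ℚ)*d*p*q^4 + d*p^2*q + (3:ℚ)*d*p^2*q^2 + (2:ℚ)*d*p^2*q^3 + (2:ℚ)*d*e*p*q^2 + (2:ℚ)*d*e*p*q^3 + d*e*p^2*q + d*e*p^2*q^2 + (2:ℚ)*d^2*q^2 + (2:ℚ)*d^2*q^3 + (2:ℚ)*d^2*p*q + (5:ℚ)*d^2*p*q^2 + (3:ℚ)*d^2*p*q^3 + d^2*e*q^2 + d^2*e*q^3 + (2:ℚ)*d^2*e*p*q + (2:ℚ)*d^2*e*p*q^2 + d^3*q + (2:ℚ)*d^3*q^2 + d^3*q^3 + d^3*e*q + d^3*e*q^2 + (-1:ℚ)*b*q^3 + b*q^5 + (-3:ℚ)*b*p*q^3 + (-3:ℚ)*b*p*q^4 + b*p^2*q^2 + b*p^2*q^3 + (-1:ℚ)*b*e*p*q^2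 + (-1:ℚ)*b*e*p*q^3 + (-1:ℚ)*b*d*q^2 + (-2:ℚ)*b*d*q^3 + (-1:ℚ)*b*d*q^4 + (-2:ℚ)*b*d*p*q^2 + (-2:ℚ)*b*d*p*q^3 + b*d*p^2*q + b*d*p^2*q^2 + (-1:ℚ)*b*d*e*q^2 + (-1:ℚ)*b*d*e*q^3 + (-1:ℚ)*b*d*e*p*q + (-1:ℚ)*b*d*e*p*q^2 + (-2:ℚ)*b*d^2*q^2 + (-2:ℚ)*b*d^2*q^3 + b*d^2*p*q + b*d^2*p*q^2 + (-1:ℚ)*b*d^2*e*q + (-1:ℚ)*b*d^2*e*q^2 + (-1:ℚ)*b^2*q^2 + b^2*q^4 + (-1:ℚ)*b^2*p*q^2 + (-1:ℚ)*b^2*p*q^3 + (-1:ℚ)*b^2*d*q + b^2*d*q^3 + (-1:ℚ)*b^2*d*p*q + (-1:ℚ)*b^2*d*p*q^2 + (-1:ℚ)*a*q^3 + a*q^5 + (-3:ℚ)*a*p*q^3 + (-3:ℚ)*a*p*q^4 + a*p^2*q^2 + a*p^2*q^3 + (-1:ℚ)*a*e*p*q^2 + (-1:ℚ)*a*e*p*q^3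 + (-1:ℚ)*a*d*q^2 + (-2:ℚ)*a*d*q^3 + (-1:ℚ)*a*d*q^4 + (-2:ℚ)*a*d*p*q^2 + (-2:ℚ)*a*d*p*q^3 + a*d*p^2*q + a*d*p^2*q^2 + (-1:ℚ)*a*d*e*q^2 + (-1:ℚ)*a*d*e*q^3 + (-1:ℚ)*a*d*e*p*q + (-1:ℚ)*a*d*e*p*q^2 + (-2:ℚ)*a*d^2*q^2 + (-2:ℚ)*a*d^2*q^3 + a*d^2*p*q + a*d^2*p*q^2 + (-1:ℚ)*a*d^2*e*q + (-1:ℚ)*a*d^2*e*q^2 + (-1:ℚ)*a*b*q + (-3:ℚ)*a*b*q^2 + a*b*q^3 + (3:ℚ)*a*b*q^4 + (-4:ℚ)*a*b*p*q^2 + (-4:ℚ)*a*b*p*q^3 + a*b*p^2*q + a*b*p^2*q^2 + (-1:ℚ)*a*b*e*q + a*b*e*q^3 + (-1:ℚ)*a*b*e*p*q + (-1:ℚ)*a*b*e*p*q^2 + (-1:ℚ)*a*b*d + (-2:ℚ)*a*b*d*q + a*b*d*q^2 + (2:ℚ)*a*b*d*q^3 + (-3:ℚ)*a*b*d*p*q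 + (-3:ℚ)*a*b*d*p*q^2 + a*b*d*p^2 + a*b*d*p^2*q + (-1:ℚ)*a*b*d*e + a*b*d*e*q^2 + (-1:ℚ)*a*b*d*e*p + (-1:ℚ)*a*b*d*e*p*q + a*b*d^2 + (-1:ℚ)*a*b*d^2*q^2 + a*b*d^2*p + a*b*d^2*p*q + (-1:ℚ)*a*b^2*q + a*b^2*q^3 + (-1:ℚ)*a*b^2*p*q + (-1:ℚ)*a*b^2*p*q^2 + (-1:ℚ)*a*b^2*d + a*b^2*d*q^2 + (-1:ℚ)*a*b^2*d*p + (-1:ℚ)*a*b^2*d*p*q + (-1:ℚ)*a^2*q^2 + a^2*q^4 + (-1:ℚ)*a^2*p*q^2 + (-1:ℚ)*a^2*p*q^3 + (-1:ℚ)*a^2*d*q + a^2*d*q^3 + (-1:ℚ)*a^2*d*p*q + (-1:ℚ)*a^2*d*p*q^2 + (-1:ℚ)*a^2*b*q + a^2*b*q^3 + (-1:ℚ)*a^2*b*p*q + (-1:ℚ)*a^2*b*p*q^2 + (-1:ℚ)*a^2*b*d + a^2*b*d*q^2 + (-1:ℚ)*a^2*b*d*p + (-1:ℚ)*a^2*b*d*p*q))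 * hee

/-- Atom-level boundary identity (`k = n` case). -/
lemma keyB_atom (a b d e p A B M D E F : ℚ)
    (hee : e = a + b - p - d)
    (he0 : e ≠ 0) (hep : e + p ≠ 0)
    (hdp : d + p ≠ 0) (hab : d - a - b + p ≠ 0)
    (hp1 : p + 1 ≠ 0)
    (hD : D ≠ 0) (hE : E ≠ 0) (hF : F ≠ 0) :
    A*B*M/(D*E*F)
      + (A*(a+p))*(B*(b+p))*(M*(-(p+1)+p))/((D*(d+p))*(E*(e+p))*((p+1)*F))
      - (d-a+p)*(d-b+p)/((d+p)*(d-a-b+p))*(A*B*(M*(p+1-p)/(p+1))/(D*(E*(e+p)/e)*F))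
    = -(p*((d-1)*(d+p-a-b)+(p+1-a-b)*p-p^2)*A*B*M/((d+p)*(p+1)*D*E*(e+p)*F)) := by
  have hDEF : D*E*F ≠ 0 := mul_ne_zero (mul_ne_zero hD hE) hF
  have hQb : (d+p)*(d-a-b+p)*(p+1)*(e+p)*(D*E*F) ≠ 0 :=
    mul_ne_zero (mul_ne_zero (mul_ne_zero (mul_ne_zero hdp hab) hp1) hep) hDEF
  have c1 : A*B*M/(D*E*F)
      = A*B*M*((d+p)*(d-a-b+p)*(p+1)*(e+p))
        /((d+p)*(d-a-b+p)*(p+1)*(e+p)*(D*E*F)) := by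
    rw [div_eq_div_iff hDEF hQb]
    ring
  have c2 : (A*(a+p))*(B*(b+p))*(M*(-(p+1)+p))/((D*(d+p))*(E*(e+p))*((p+1)*F))
      = (A*(a+p))*(B*(b+p))*(-M)*(d-a-b+p)
        /((d+p)*(d-a-b+p)*(p+1)*(e+p)*(D*E*F)) := by
    rw [div_eq_div_iff (mul_ne_zero (mul_ne_zero (mul_ne_zero hD hdp) (mul_ne_zero hE hep))
      (mul_ne_zero hp1 hF)) hQb]
    ring
  have c3 : (d-a+p)*(d-b+p)/((d+p)*(d-a-b+p))*(A*B*(M*(p+1-p)/(p+1))/(D*(E*(e+p)/e)*F))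
      = (d-a+p)*(d-b+p)*(A*B*M)*e
        /((d+p)*(d-a-b+p)*(p+1)*(e+p)*(D*E*F)) := by
    field_simp
    ring
  have c4 : p*((d-1)*(d+p-a-b)+(p+1-a-b)*p-p^2)*A*B*M/((d+p)*(p+1)*D*E*(e+p)*F)
      = p*((d-1)*(d+p-a-b)+(p+1-a-b)*p-p^2)*(A*B*M)*(d-a-b+p)
        /((d+p)*(d-a-b+p)*(p+1)*(e+p)*(D*E*F)) := by
    rw [div_eq_div_iff (mul_ne_zero (mul_ne_zero (mul_ne_zero (mul_ne_zero (mul_ne_zero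
      hdp hp1) hD) hE) hep) hF) hQb]
    generalize (d-1)*(d+p-a-b)+(p+1-a-b)*p-p^2 = r2
    ring
  rw [c1, c2, c3, c4, ← add_div, div_sub_div_same, ← neg_div]
  congr 1
  rw [hee]
  ring

lemma pfaff_saalschutz_aux : ∀ (n : ℕ) (a b d e : ℚ),
    d + e = a + b - n + 1 →
    (∀ k ≤ n, rise d k ≠ 0) → (∀ k ≤ n, rise e k ≠ 0) →
    rise (d - a - b) n ≠ 0 →
    ∑ k ∈ Finset.range (n + 1),
        rise a k * rise b k * rise (-(n : ℚ)) k / (rise d k * rise e k * (Nat.factorial k))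
      = rise (d - a) n * rise (d - b) n / (rise d n * rise (d - a - b) n) := by
  intro n
  induction n with
  | zero =>
      intro a b d e h hd he hdab
      simp [rise]
  | succ n ih =>
      intro a b d e h hd he hdab
      have hdf : ∀ i ≤ n, d + (i:ℚ) ≠ 0 := fun i hi =>
        rise_factor (hd (n+1) le_rfl) (Nat.lt_succ_of_le hi)
      have hef : ∀ i ≤ n, e + (i:ℚ) ≠ 0 := fun i hi =>
        rise_factor (he (n+1) le_rfl) (Nat.lt_succ_of_le hi)
      have habf : ∀ i ≤ n, d - a - b + (i:ℚ) ≠ 0 := fun i hi =>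
        rise_factor hdab (Nat.lt_succ_of_le hi)
      have hdn : d + (n:ℚ) ≠ 0 := hdf n le_rfl
      have habn : d - a - b + (n:ℚ) ≠ 0 := habf n le_rfl
      have he0 : e ≠ 0 := by simpa using hef 0 (Nat.zero_le n)
      have hee : e = a + b - (n:ℚ) - d := by push_cast at h; linarith
      have hE1k : ∀ k ≤ n, rise (e+1) k ≠ 0 := by
        intro k hk
        rw [rise, Finset.prod_ne_zero_iff]
        intro i hi
        have hi' : i + 1 ≤ n := by have := Finset.mem_range.1 hi; omega
        have h2 := hef (i+1) hi'
        push_cast at h2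
        intro hz; apply h2; linarith
      have Hn := ih a b d (e+1) (by push_cast at h ⊢; linarith)
        (fun k hk => hd k (hk.trans (Nat.le_succ n)))
        hE1k (rise_ne_zero_of_le hdab (Nat.le_succ n))
      set c : ℚ := (d-a+(n:ℚ))*(d-b+(n:ℚ))/((d+(n:ℚ))*(d-a-b+(n:ℚ))) with hc
      have hM0 : ∀ k : ℕ, rise (-(n:ℚ)) k
          = rise (-((n:ℚ)+1)) k * ((n:ℚ)+1-(k:ℚ)) / ((n:ℚ)+1) := by
        intro k
        have hs := rise_shift (-((n:ℚ)+1)) k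
        have harg : (-((n:ℚ)+1) + 1) = -(n:ℚ) := by ring
        rw [harg] at hs
        have hn1 : ((n:ℚ)+1) ≠ 0 := by positivity
        rw [eq_div_iff hn1]
        linear_combination -hs
      have hE1 : ∀ k : ℕ, rise (e+1) k = rise e k * (e+(k:ℚ)) / e := by
        intro k
        have hs := rise_shift e k
        rw [eq_div_iff he0]
        linear_combination hs
      -- telescoping identity for k < n
      have keyA : ∀ k < n,
          rise a k * rise b k * rise (-((n:ℚ)+1)) k / (rise d k * rise e k * (Nat.factorial k))
            - c * (rise a k * rise b k * rise (-(n:ℚ)) k / (rise d k * rise (e+1) k * (Nat.factorial k)))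
          = WZ n a b d e (k+1) - WZ n a b d e k := by
        intro k hk
        have hek : e + (k:ℚ) ≠ 0 := hef k hk.le
        have hek1 : e + (k:ℚ) + 1 ≠ 0 := by
          have := hef (k+1) hk
          push_cast at this; intro hz; apply this; linarith
        have hdk : d + (k:ℚ) ≠ 0 := hdf k hk.le
        have hD : rise d k ≠ 0 := rise_ne_zero_of_le (hd (n+1) le_rfl) (by omega)
        have hE : rise e k ≠ 0 := rise_ne_zero_of_le (he (n+1) le_rfl) (by omega)
        have hF : ((Nat.factorial k : ℚ)) ≠ 0 := by
          exact_mod_cast Nat.factorial_ne_zero k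
        have hn1 : ((n:ℚ)+1) ≠ 0 := by positivity
        have hk1 : ((k:ℚ)+1) ≠ 0 := by positivity
        rw [WZ, WZ, hM0 k, hE1 k, hc]
        rw [rise_succ a, rise_succ b, rise_succ (-((n:ℚ)+1)), rise_succ d, rise_succ e,
          Nat.factorial_succ]
        push_cast
        linear_combination keyA_atom a b d e (n:ℚ) (k:ℚ)
          (rise a k) (rise b k) (rise (-((n:ℚ)+1)) k) (rise d k) (rise e k) ((Nat.factorial k : ℚ))
          hee he0 hek hek1 hdk hdn habn hn1 hk1 hD hE hF
      -- boundary identity at k = n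
      have keyB :
          rise a n * rise b n * rise (-((n:ℚ)+1)) n / (rise d n * rise e n * (Nat.factorial n))
            + rise a (n+1) * rise b (n+1) * rise (-((n:ℚ)+1)) (n+1)
              / (rise d (n+1) * rise e (n+1) * (Nat.factorial (n+1)))
            - c * (rise a n * rise b n * rise (-(n:ℚ)) n / (rise d n * rise (e+1) n * (Nat.factorial n)))
          = - WZ n a b d e n := by
        have hen : e + (n:ℚ) ≠ 0 := hef n le_rfl
        have hD : rise d n ≠ 0 := rise_ne_zero_of_le (hd (n+1) le_rfl) (Nat.le_succ n)
        have hE : rise e n ≠ 0 := rise_ne_zero_of_le (he (n+1) le_rfl) (Nat.le_succ n)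
        have hF : ((Nat.factorial n : ℚ)) ≠ 0 := by
          exact_mod_cast Nat.factorial_ne_zero n
        have hn1 : ((n:ℚ)+1) ≠ 0 := by positivity
        rw [WZ, hM0 n, hE1 n, hc]
        rw [rise_succ a, rise_succ b, rise_succ (-((n:ℚ)+1)), rise_succ d, rise_succ e,
          Nat.factorial_succ]
        push_cast
        linear_combination keyB_atom a b d e (n:ℚ)
          (rise a n) (rise b n) (rise (-((n:ℚ)+1)) n) (rise d n) (rise e n) ((Nat.factorial n : ℚ))
          hee he0 hen hdn habn hn1 hD hE hF
      -- assemble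
      have tele : ∑ k ∈ Finset.range n, (WZ n a b d e (k+1) - WZ n a b d e k)
          = WZ n a b d e n - WZ n a b d e 0 := Finset.sum_range_sub _ n
      have hW0 : WZ n a b d e 0 = 0 := by simp [WZ]
      have hcast : (-((n:ℕ)+1:ℕ) : ℚ) = -((n:ℚ)+1) := by push_cast; ring
      rw [hcast]
      rw [Finset.sum_range_succ, Finset.sum_range_succ]
      rw [Finset.sum_range_succ] at Hn
      have hdiff : ∑ k ∈ Finset.range n,
            (rise a k * rise b k * rise (-((n:ℚ)+1)) k / (rise d k * rise e k * (Nat.factorial k)))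
          - c * ∑ k ∈ Finset.range n,
              (rise a k * rise b k * rise (-(n:ℚ)) k / (rise d k * rise (e+1) k * (Nat.factorial k)))
          = WZ n a b d e n - WZ n a b d e 0 := by
        rw [← tele, Finset.mul_sum, ← Finset.sum_sub_distrib]
        exact Finset.sum_congr rfl (fun k hk => keyA k (Finset.mem_range.1 hk))
      rw [hW0, sub_zero] at hdiff
      -- conclude LHS = c * RHS_n
      have hmain : ∑ k ∈ Finset.range n,
            (rise a k * rise b k * rise (-((n:ℚ)+1)) k / (rise d k * rise e k * (Nat.factorial k)))
          + rise a n * rise b n * rise (-((n:ℚ)+1)) n / (rise d n * rise e n * (Nat.factorial n))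
          + rise a (n+1) * rise b (n+1) * rise (-((n:ℚ)+1)) (n+1)
              / (rise d (n+1) * rise e (n+1) * (Nat.factorial (n+1)))
          = c * (∑ k ∈ Finset.range n,
              (rise a k * rise b k * rise (-(n:ℚ)) k / (rise d k * rise (e+1) k * (Nat.factorial k)))
            + rise a n * rise b n * rise (-(n:ℚ)) n / (rise d n * rise (e+1) n * (Nat.factorial n))) := by
        rw [mul_add]
        linarith [keyB, hdiff]
      rw [hmain, Hn]
      have hDn : rise d n ≠ 0 := rise_ne_zero_of_le (hd (n+1) le_rfl) (Nat.le_succ n)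
      have hABn : rise (d-a-b) n ≠ 0 := rise_ne_zero_of_le hdab (Nat.le_succ n)
      rw [rise_succ (d-a), rise_succ (d-b), rise_succ d, rise_succ (d-a-b), hc]
      field_simp

/-- The Pfaff–Saalschütz identity: if `d + e = a + b - n + 1` and no denominator
vanishes, then `∑_{k=0}^{n} (a)_k (b)_k (-n)_k / ((d)_k (e)_k k!) =
(d-a)_n (d-b)_n / ((d)_n (d-a-b)_n)`. -/
theorem pfaff_saalschutz (n : ℕ) (a b d e : ℚ)
    (h : d + e = a + b - n + 1)
    (hd : ∀ k ≤ n, rise d k ≠ 0) (he : ∀ k ≤ n, rise e k ≠ 0)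
    (hdab : rise (d - a - b) n ≠ 0) :
    ∑ k ∈ Finset.range (n + 1),
        rise a k * rise b k * rise (-(n : ℚ)) k / (rise d k * rise e k * (Nat.factorial k))
      = rise (d - a) n * rise (d - b) n / (rise d n * rise (d - a - b) n) := by
  exact pfaff_saalschutz_aux n a b d e h hd he hdab
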